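/- Let h>0 and 0<s<1, and let u,v:ℤ→ℝ satisfy Σ_j |u_j|²<∞ and Σ_j |v_j|²<∞. Then h·Σ_{j∈ℤ} ((-Δ_h)^s u_j)·v_j = (h/2)·Σ_{j∈ℤ}Σ_{m∈ℤ, m≠j} (u_j−u_m)(v_j−v_m)·K_s^h(j−m), all sums being absolutely convergent. -/
import Mathlib


/-- The kernel of the fractional discrete Laplacian on the mesh of size `h`. -/
noncomputable def Ksh (h s : ℝ) (m : ℤ) : ℝ :=
  if m = 0 then 0 else
    ((4 : ℝ) ^ s * Real.Gamma (1/2 + s) / (Real.sqrt Real.pi * (Real.Gamma (1 - s) / s))) *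
      (Real.Gamma (|(m : ℝ)| - s) / (h ^ (2 * s) * Real.Gamma (|(m : ℝ)| + 1 + s)))

/-- The fractional discrete Laplacian `(-Δ_h)^s u_j = Σ_{m ≠ j} (u_j - u_m) K_s^h(j-m)`. -/
noncomputable def fracLap (h s : ℝ) (u : ℤ → ℝ) (j : ℤ) : ℝ :=
  ∑' m : ℤ, (u j - u m) * Ksh h s (j - m)

lemma Ksh_neg (h s : ℝ) (m : ℤ) : Ksh h s (-m) = Ksh h s m := by
  unfold Ksh
  simp [neg_eq_zero, abs_neg]

lemma Ksh_pos {h s : ℝ} (hh : 0 < h) (hs0 : 0 < s) (hs1 : s < 1) {m : ℤ} (hm : m ≠ 0) :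
    0 < Ksh h s m := by
  have h1 : (1:ℝ) ≤ |(m:ℝ)| := by
    rw [← Int.cast_abs]
    exact_mod_cast Int.one_le_abs (by omega)
  have hC : 0 < (4 : ℝ) ^ s * Real.Gamma (1/2 + s) / (Real.sqrt Real.pi * (Real.Gamma (1 - s) / s)) := by
    apply div_pos (mul_pos (Real.rpow_pos_of_pos (by norm_num) s)
      (Real.Gamma_pos_of_pos (by linarith)))
    exact mul_pos (Real.sqrt_pos.2 Real.pi_pos)
      (div_pos (Real.Gamma_pos_of_pos (by linarith)) hs0)
  have h2 : 0 < Real.Gamma (|(m : ℝ)| - s) := Real.Gamma_pos_of_pos (by linarith)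
  have h3 : 0 < Real.Gamma (|(m : ℝ)| + 1 + s) := Real.Gamma_pos_of_pos (by linarith)
  have h4 : 0 < h ^ (2 * s) := Real.rpow_pos_of_pos hh _
  unfold Ksh
  rw [if_neg hm]
  exact mul_pos hC (div_pos h2 (mul_pos h4 h3))

lemma Ksh_nonneg {h s : ℝ} (hh : 0 < h) (hs0 : 0 < s) (hs1 : s < 1) (m : ℤ) :
    0 ≤ Ksh h s m := by
  rcases eq_or_ne m 0 with rfl | hm
  · simp [Ksh]
  · exact (Ksh_pos hh hs0 hs1 hm).le

lemma gamma_ratio_telescope {s : ℝ} (hs0 : 0 < s) (hs1 : s < 1) {x : ℝ} (hx : 1 ≤ x) :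
    Real.Gamma (x - s) / Real.Gamma (x + 1 + s)
      = (Real.Gamma (x - s) / Real.Gamma (x + s)
          - Real.Gamma (x + 1 - s) / Real.Gamma (x + 1 + s)) / (2 * s) := by
  have hxs : (0:ℝ) < x - s := by linarith
  have hxs' : (0:ℝ) < x + s := by linarith
  have e1 : Real.Gamma (x + 1 + s) = (x + s) * Real.Gamma (x + s) := by
    rw [show x + 1 + s = (x + s) + 1 by ring, Real.Gamma_add_one (ne_of_gt hxs')]
  have e2 : Real.Gamma (x + 1 - s) = (x - s) * Real.Gamma (x - s) := by
    rw [show x + 1 - s = (x - s) + 1 by ring, Real.Gamma_add_one (ne_of_gt hxs)]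
  have g1 : Real.Gamma (x + s) ≠ 0 := (Real.Gamma_pos_of_pos hxs').ne'
  rw [e1, e2]
  field_simp
  ring

lemma summable_Ksh_natsucc {h s : ℝ} (hh : 0 < h) (hs0 : 0 < s) (hs1 : s < 1) :
    Summable (fun n : ℕ => Ksh h s ((n : ℤ) + 1)) := by
  set C : ℝ := ((4 : ℝ) ^ s * Real.Gamma (1/2 + s) / (Real.sqrt Real.pi * (Real.Gamma (1 - s) / s)))
      / h ^ (2 * s) with hCdef
  have hC : 0 ≤ C := by
    apply div_nonneg _ (Real.rpow_pos_of_pos hh _).le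
    exact (div_pos (mul_pos (Real.rpow_pos_of_pos (by norm_num) s)
      (Real.Gamma_pos_of_pos (by linarith)))
      (mul_pos (Real.sqrt_pos.2 Real.pi_pos)
        (div_pos (Real.Gamma_pos_of_pos (by linarith)) hs0))).le
  set d : ℕ → ℝ := fun n => Real.Gamma ((n:ℝ) + 1 - s) / Real.Gamma ((n:ℝ) + 1 + s) with hd
  have hdnn : ∀ n, 0 ≤ d n := by
    intro n
    apply div_nonneg (Real.Gamma_pos_of_pos (by linarith [Nat.cast_nonneg (α := ℝ) n])).le
      (Real.Gamma_pos_of_pos (by positivity)).le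
  have key : ∀ n : ℕ, Ksh h s ((n : ℤ) + 1) = (C / (2 * s)) * (d n - d (n + 1)) := by
    intro n
    have hne : ((n : ℤ) + 1) ≠ 0 := by omega
    have habs : |(((n : ℤ) + 1 : ℤ) : ℝ)| = (n : ℝ) + 1 := by
      push_cast
      rw [abs_of_nonneg (by positivity)]
    have e := gamma_ratio_telescope hs0 hs1 (x := (n:ℝ) + 1)
      (by linarith [Nat.cast_nonneg (α := ℝ) n])
    have expand : Real.Gamma ((n:ℝ)+1-s) / (h^(2*s) * Real.Gamma ((n:ℝ)+1+1+s))
        = (Real.Gamma ((n:ℝ)+1-s) / Real.Gamma ((n:ℝ)+1+1+s)) / h^(2*s) := by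
      rw [div_div, mul_comm]
    rw [Ksh, if_neg hne, habs, expand, e]
    simp only [hd, hCdef]
    push_cast
    ring
  have hsum : Summable (fun n : ℕ => (C / (2 * s)) * (d n - d (n + 1))) := by
    apply summable_of_sum_range_le (c := (C / (2 * s)) * d 0)
    · intro n
      rw [← key n]
      exact Ksh_nonneg hh hs0 hs1 _
    · intro n
      rw [← Finset.mul_sum, Finset.sum_range_sub' d n]
      have : 0 ≤ C / (2 * s) := by positivity
      nlinarith [hdnn n, hdnn 0, mul_nonneg this (hdnn n)]
  exact hsum.congr fun n => (key n).symm

lemma summable_Ksh {h s : ℝ} (hh : 0 < h) (hs0 : 0 < s) (hs1 : s < 1) :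
    Summable (fun m : ℤ => Ksh h s m) := by
  have h1 := summable_Ksh_natsucc hh hs0 hs1
  have hnat : Summable (fun n : ℕ => Ksh h s (n : ℤ)) := by
    rw [← summable_nat_add_iff 1]
    exact h1.congr fun n => by norm_num
  apply Summable.of_nat_of_neg_add_one hnat
  exact h1.congr fun n => by rw [show (-(↑n + 1) : ℤ) = -((n:ℤ) + 1) by ring, Ksh_neg]

lemma summable_Ksh_sub {h s : ℝ} (hh : 0 < h) (hs0 : 0 < s) (hs1 : s < 1) (j : ℤ) :
    Summable (fun m : ℤ => Ksh h s (j - m)) :=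
  ((Equiv.subLeft j).summable_iff (f := fun m => Ksh h s m)).2 (summable_Ksh hh hs0 hs1)

/-- shear summability: `(j, m) ↦ g j * K (j - m)` -/
lemma summable_fst_mul_Ksh {h s : ℝ} (hh : 0 < h) (hs0 : 0 < s) (hs1 : s < 1)
    {g : ℤ → ℝ} (hg : Summable g) (hgnn : ∀ i, 0 ≤ g i) :
    Summable (fun p : ℤ × ℤ => g p.1 * Ksh h s (p.1 - p.2)) := by
  have base : Summable (fun p : ℤ × ℤ => g p.1 * Ksh h s p.2) :=
    hg.mul_of_nonneg (summable_Ksh hh hs0 hs1) hgnn (Ksh_nonneg hh hs0 hs1)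
  have := ((Equiv.prodShear (Equiv.refl ℤ) (fun j => Equiv.subLeft j)).summable_iff
    (f := fun p : ℤ × ℤ => g p.1 * Ksh h s p.2)).2 base
  exact this.congr fun p => by
    simp [Equiv.prodShear, Equiv.subLeft]

lemma summable_snd_mul_Ksh {h s : ℝ} (hh : 0 < h) (hs0 : 0 < s) (hs1 : s < 1)
    {g : ℤ → ℝ} (hg : Summable g) (hgnn : ∀ i, 0 ≤ g i) :
    Summable (fun p : ℤ × ℤ => g p.2 * Ksh h s (p.1 - p.2)) := by
  have := ((Equiv.prodComm ℤ ℤ).summable_iff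
      (f := fun p : ℤ × ℤ => g p.1 * Ksh h s (p.1 - p.2))).2
    (summable_fst_mul_Ksh hh hs0 hs1 hg hgnn)
  refine this.congr fun p => ?_
  simp only [Equiv.prodComm_apply, Function.comp_apply, Prod.fst_swap, Prod.snd_swap]
  rw [show p.2 - p.1 = -(p.1 - p.2) by ring, Ksh_neg]

/-- The bilinear (integration by parts) identity for the fractional discrete Laplacian
on `ℓ²` functions, all sums being absolutely convergent. -/
theorem fracLap_bilinear_identity (h s : ℝ) (hh : 0 < h) (hs0 : 0 < s) (hs1 : s < 1)
    (u v : ℤ → ℝ) (hu : Summable fun j : ℤ => (u j) ^ 2)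
    (hv : Summable fun j : ℤ => (v j) ^ 2) :
    (∀ j : ℤ, Summable fun m : ℤ => |(u j - u m) * Ksh h s (j - m)|) ∧
    (Summable fun j : ℤ => |fracLap h s u j * v j|) ∧
    (Summable fun p : ℤ × ℤ =>
      |(u p.1 - u p.2) * (v p.1 - v p.2) * Ksh h s (p.1 - p.2)|) ∧
    h * ∑' j : ℤ, fracLap h s u j * v j =
      h / 2 * ∑' j : ℤ, ∑' m : ℤ, (u j - u m) * (v j - v m) * Ksh h s (j - m) := by
  have hKnn := Ksh_nonneg hh hs0 hs1
  -- `u` is bounded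
  have hMub : ∀ m, |u m| ≤ Real.sqrt (∑' j, u j ^ 2) := by
    intro m
    rw [← Real.sqrt_sq_eq_abs]
    exact Real.sqrt_le_sqrt (Summable.le_tsum hu m fun i _ => sq_nonneg _)
  set Mu := Real.sqrt (∑' j, u j ^ 2) with hMudef
  -- claim 1
  have claim1 : ∀ j : ℤ, Summable fun m : ℤ => |(u j - u m) * Ksh h s (j - m)| := by
    intro j
    apply Summable.of_nonneg_of_le (fun m => abs_nonneg _)
      (f := fun m => (|u j| + Mu) * Ksh h s (j - m))
      ?_ (((summable_Ksh_sub hh hs0 hs1 j)).mul_left _)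
    intro m
    rw [abs_mul, abs_of_nonneg (hKnn _)]
    apply mul_le_mul_of_nonneg_right ?_ (hKnn _)
    have h1 : |u j - u m| ≤ |u j| + |u m| := abs_sub _ _
    linarith [hMub m]
  -- summable majorants on the product
  have hu' : ∀ i : ℤ, 0 ≤ u i ^ 2 := fun i => sq_nonneg _
  have hv' : ∀ i : ℤ, 0 ≤ v i ^ 2 := fun i => sq_nonneg _
  have S1 := summable_fst_mul_Ksh hh hs0 hs1 hu hu'
  have S2 := summable_snd_mul_Ksh hh hs0 hs1 hu hu'
  have S3 := summable_fst_mul_Ksh hh hs0 hs1 hv hv'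
  have S4 := summable_snd_mul_Ksh hh hs0 hs1 hv hv'
  have hW : Summable (fun p : ℤ × ℤ =>
      (u p.1 ^ 2 + u p.2 ^ 2 + v p.1 ^ 2 + v p.2 ^ 2) * Ksh h s (p.1 - p.2)) :=
    (((S1.add S2).add S3).add S4).congr fun p => by ring
  have hWF : Summable (fun p : ℤ × ℤ =>
      (u p.1 ^ 2 + u p.2 ^ 2 + v p.1 ^ 2) * Ksh h s (p.1 - p.2)) :=
    ((S1.add S2).add S3).congr fun p => by ring
  -- claim 3
  have claim3 : Summable (fun p : ℤ × ℤ =>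
      |(u p.1 - u p.2) * (v p.1 - v p.2) * Ksh h s (p.1 - p.2)|) := by
    apply Summable.of_nonneg_of_le (fun p => abs_nonneg _) ?_ hW
    intro p
    rw [abs_mul, abs_of_nonneg (hKnn _), abs_mul]
    apply mul_le_mul_of_nonneg_right ?_ (hKnn _)
    nlinarith [sq_nonneg (|u p.1 - u p.2| - |v p.1 - v p.2|),
      sq_abs (u p.1 - u p.2), sq_abs (v p.1 - v p.2),
      sq_nonneg (u p.1 + u p.2), sq_nonneg (v p.1 + v p.2),
      abs_nonneg (u p.1 - u p.2), abs_nonneg (v p.1 - v p.2)]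
  -- the function F
  set F : ℤ × ℤ → ℝ := fun p => (u p.1 - u p.2) * v p.1 * Ksh h s (p.1 - p.2) with hFdef
  have hFabs : Summable (fun p : ℤ × ℤ => |F p|) := by
    apply Summable.of_nonneg_of_le (fun p => abs_nonneg _) ?_ hWF
    intro p
    rw [hFdef]
    simp only
    rw [abs_mul, abs_of_nonneg (hKnn _), abs_mul]
    apply mul_le_mul_of_nonneg_right ?_ (hKnn _)
    nlinarith [sq_nonneg (|u p.1 - u p.2| - |v p.1|),
      sq_abs (u p.1 - u p.2), sq_abs (v p.1),
      sq_nonneg (u p.1 + u p.2),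
      abs_nonneg (u p.1 - u p.2), abs_nonneg (v p.1)]
  have hFsum : Summable F := summable_abs_iff.1 hFabs
  -- rows of F
  have hrow : ∀ j : ℤ, fracLap h s u j * v j = ∑' m, F (j, m) := by
    intro j
    rw [fracLap, ← tsum_mul_right]
    exact tsum_congr fun m => by rw [hFdef]; ring
  -- claim 2
  have hprod := (summable_prod_of_nonneg (f := fun p => |F p|) (fun p => abs_nonneg _)).1 hFabs
  have claim2 : Summable fun j : ℤ => |fracLap h s u j * v j| := by
    apply Summable.of_nonneg_of_le (fun j => abs_nonneg _) ?_ hprod.2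
    intro j
    rw [hrow j]
    have := norm_tsum_le_tsum_norm (f := fun m => F (j, m)) (hprod.1 j)
    simpa using this
  -- the identity
  have hGsum : Summable (fun p : ℤ × ℤ => (u p.2 - u p.1) * v p.2 * Ksh h s (p.1 - p.2)) := by
    have := ((Equiv.prodComm ℤ ℤ).summable_iff (f := F)).2 hFsum
    refine this.congr fun p => ?_
    simp only [hFdef, Equiv.prodComm_apply, Function.comp_apply, Prod.fst_swap, Prod.snd_swap]
    rw [show p.2 - p.1 = -(p.1 - p.2) by ring, Ksh_neg]
  have hGF : ∑' p : ℤ × ℤ, (u p.2 - u p.1) * v p.2 * Ksh h s (p.1 - p.2) = ∑' p, F p := by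
    rw [← (Equiv.prodComm ℤ ℤ).tsum_eq F]
    refine tsum_congr fun p => ?_
    simp only [hFdef, Equiv.prodComm_apply, Prod.fst_swap, Prod.snd_swap]
    rw [show p.2 - p.1 = -(p.1 - p.2) by ring, Ksh_neg]
  have hTsum : Summable (fun p : ℤ × ℤ =>
      (u p.1 - u p.2) * (v p.1 - v p.2) * Ksh h s (p.1 - p.2)) := summable_abs_iff.1 claim3
  have eq3 : ∑' p : ℤ × ℤ, (u p.1 - u p.2) * (v p.1 - v p.2) * Ksh h s (p.1 - p.2)
      = 2 * ∑' p : ℤ × ℤ, F p := by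
    have hadd := Summable.tsum_add hFsum hGsum
    have : ∑' p : ℤ × ℤ, (u p.1 - u p.2) * (v p.1 - v p.2) * Ksh h s (p.1 - p.2)
        = ∑' p : ℤ × ℤ, (F p + (u p.2 - u p.1) * v p.2 * Ksh h s (p.1 - p.2)) :=
      tsum_congr fun p => by rw [hFdef]; ring
    rw [this, hadd, hGF]; ring
  have eq1 : ∑' j : ℤ, fracLap h s u j * v j = ∑' p : ℤ × ℤ, F p := by
    rw [tsum_congr hrow]
    exact (Summable.tsum_prod' hFsum (fun b => hFsum.prod_factor b)).symm
  have eq2 : ∑' j : ℤ, ∑' m : ℤ, (u j - u m) * (v j - v m) * Ksh h s (j - m)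
      = ∑' p : ℤ × ℤ, (u p.1 - u p.2) * (v p.1 - v p.2) * Ksh h s (p.1 - p.2) :=
    (Summable.tsum_prod' hTsum (fun b => hTsum.prod_factor b)).symm
  refine ⟨claim1, claim2, claim3, ?_⟩
  rw [eq1, eq2, eq3]
  ring
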